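/- Let d ∈ ℕ and h a dimension function with h ≺ x^d. Then there exists a compact set E ⊆ ℝ^d with ℋ^h(E) > 0 containing no four distinct points x₁, x₂, x₃, x₄ with x₁ − x₂ + x₃ − x₄ = 0 (i.e. E contains no vertices of a parallelogram). -/

import Mathlib

open MeasureTheory Filter Set

/-- A dimension function: vanishes at 0, positive on positives, increasing,
right-continuous. -/
def IsDimFun (h : ℝ → ℝ) : Prop :=
  h 0 = 0 ∧ (∀ t > 0, 0 < h t) ∧ MonotoneOn h (Set.Ici 0) ∧
    ∀ t ∈ Set.Ici (0 : ℝ), ContinuousWithinAt h (Set.Ici t) t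

/-- The Hausdorff measure associated to a gauge (dimension) function `h`. -/
noncomputable def gaugeMeasure {X : Type*} [EMetricSpace X] [MeasurableSpace X]
    [BorelSpace X] (h : ℝ → ℝ) : Measure X :=
  Measure.mkMetric fun r => ENNReal.ofReal (h r.toReal)

/-- `Prec h₂ h₁` means `h₂ ≺ h₁`, i.e. `lim_{x→0⁺} h₁ x / h₂ x = 0`. -/
def Prec (h₂ h₁ : ℝ → ℝ) : Prop :=
  Tendsto (fun x => h₁ x / h₂ x) (nhdsWithin 0 (Set.Ioi 0)) (nhds 0)

namespace Keleti

variable {d : ℕ} {h : ℝ → ℝ}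

lemma hmono (hdim : IsDimFun h) : ∀ a b : ℝ, 0 ≤ a → a ≤ b → h a ≤ h b :=
  fun a b ha hab => hdim.2.2.1 ha (le_trans ha hab) hab

lemma hpos (hdim : IsDimFun h) : ∀ t : ℝ, 0 < t → 0 < h t := fun t ht => hdim.2.1 t ht

lemma hsmall (hdim : IsDimFun h) (hprec : Prec h (fun x : ℝ => x ^ d)) (L : ℝ) :
    ∃ ρ : ℝ, 0 < ρ ∧ ρ ≤ 1 ∧ ∀ x : ℝ, 0 < x → x ≤ ρ → L * x ^ d ≤ h x := by
  set M := max L 1 with hM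
  have hM1 : (1:ℝ) ≤ M := le_max_right _ _
  have hMpos : 0 < M + 1 := by linarith
  have hev : ∀ᶠ x in nhdsWithin (0:ℝ) (Set.Ioi 0), x ^ d / h x < 1 / (M + 1) := by
    have h1 : (0:ℝ) < 1 / (M + 1) := by positivity
    exact hprec.eventually_lt_const h1
  rw [eventually_nhdsWithin_iff, Metric.eventually_nhds_iff] at hev
  obtain ⟨r, hr, hball⟩ := hev
  refine ⟨min (r / 2) 1, by positivity, min_le_right _ _, ?_⟩
  intro x hx hxle
  have hxr : dist x 0 < r := by
    rw [Real.dist_eq, sub_zero, abs_of_pos hx]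
    calc x ≤ min (r/2) 1 := hxle
    _ ≤ r/2 := min_le_left _ _
    _ < r := by linarith
  have hq : x ^ d / h x < 1 / (M + 1) := hball hxr hx
  have hhx : 0 < h x := hpos hdim x hx
  have hxd : (0:ℝ) ≤ x ^ d := by positivity
  have h2 : (M + 1) * x ^ d < h x := by
    rw [div_lt_div_iff₀ hhx hMpos] at hq
    linarith
  have : L * x ^ d ≤ M * x ^ d := by
    apply mul_le_mul_of_nonneg_right (le_max_left _ _) hxd
  linarith

variable (hd : 0 < d) (hdim : IsDimFun h) (hprec : Prec h (fun x : ℝ => x ^ d))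

noncomputable def rhoSel (L : ℝ) : ℝ := (hsmall hdim hprec L).choose

lemma rhoSel_pos (L : ℝ) : 0 < rhoSel hdim hprec L := (hsmall hdim hprec L).choose_spec.1
lemma rhoSel_le_one (L : ℝ) : rhoSel hdim hprec L ≤ 1 := (hsmall hdim hprec L).choose_spec.2.1
lemma rhoSel_spec (L : ℝ) : ∀ x : ℝ, 0 < x → x ≤ rhoSel hdim hprec L → L * x ^ d ≤ h x :=
  (hsmall hdim hprec L).choose_spec.2.2

noncomputable def CC : ℝ := 12 ^ d * max 1 (1 / h (rhoSel hdim hprec 1))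

lemma CC_pos : 0 < CC hdim hprec := by
  have : (0:ℝ) < 12 ^ d := by positivity
  have h1 : (0:ℝ) < max 1 (1 / h (rhoSel hdim hprec 1)) := lt_of_lt_of_le one_pos (le_max_left _ _)
  exact mul_pos this h1

lemma CC_ge : (12:ℝ) ^ d ≤ CC hdim hprec := by
  have h0 : (0:ℝ) < 12 ^ d := by positivity
  have := le_max_left (1:ℝ) (1 / h (rhoSel hdim hprec 1))
  calc (12:ℝ)^d = 12^d * 1 := by ring
  _ ≤ 12^d * max 1 (1 / h (rhoSel hdim hprec 1)) := by
      exact mul_le_mul_of_nonneg_left this (le_of_lt h0)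
  _ = CC hdim hprec := rfl

/-- Invariant at stage 0. -/
lemma I_zero : ∀ t : ℝ, 0 < t → t ≤ 1 → 12 ^ d * (t / 1) ^ d ≤ CC hdim hprec * 1 * h t := by
  intro t ht ht1
  rw [div_one, mul_one]
  set τ := rhoSel hdim hprec 1 with hτ
  have hτpos : 0 < τ := rhoSel_pos hdim hprec 1
  have h12 : (0:ℝ) < 12 ^ d := by positivity
  rcases le_or_gt t τ with hc | hc
  · have : 1 * t ^ d ≤ h t := rhoSel_spec hdim hprec 1 t ht hc
    rw [one_mul] at this
    have hCC := CC_ge (h := h) hdim hprec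
    have hht : 0 < h t := hpos hdim t ht
    nlinarith
  · have hhτ : 0 < h τ := hpos hdim τ hτpos
    have hmle : h τ ≤ h t := hmono hdim τ t (le_of_lt hτpos) (le_of_lt hc)
    have htd : t ^ d ≤ 1 := pow_le_one₀ (le_of_lt ht) ht1
    have : 12 ^ d * (1 / h τ) ≤ CC hdim hprec := by
      unfold CC
      apply mul_le_mul_of_nonneg_left (le_max_right _ _) (le_of_lt h12)
    have hCCht : 12 ^ d * (1 / h τ) * h t ≤ CC hdim hprec * h t := by
      apply mul_le_mul_of_nonneg_right this (le_of_lt (hpos hdim t ht))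
    have h3 : (1:ℝ) ≤ (1 / h τ) * h t := by
      rw [one_div, inv_mul_eq_div, le_div_iff₀ hhτ]
      nlinarith
    have : 12 ^ d ≤ 12 ^ d * ((1 / h τ) * h t) := by nlinarith
    nlinarith
end Keleti

namespace Keleti2
open Keleti
variable {d : ℕ} {h : ℝ → ℝ}
variable (hdim : IsDimFun h) (hprec : Prec h (fun x : ℝ => x ^ d))

def Kc (k : ℕ) : ℕ := 12 * 4 ^ k

noncomputable def Lc (d : ℕ) (C : ℝ) (k : ℕ) (δ : ℝ) : ℝ :=
  12 ^ d * (2 * Kc k) ^ d / (C * k * δ ^ d)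

noncomputable def mstep (k : ℕ) (δ : ℝ) : ℕ :=
  max 2 ⌈δ / (Kc k * rhoSel hdim hprec (Lc d (CC hdim hprec) k δ))⌉₊

noncomputable def par : ℕ → ℕ × ℝ
  | 0 => (1, 1)
  | n + 1 =>
    let p := par n
    let m := mstep hdim hprec p.1 p.2
    (p.1 * m ^ d, p.2 / (Kc p.1 * (m + 1)))

noncomputable def kk (n : ℕ) : ℕ := (par hdim hprec n).1
noncomputable def dl (n : ℕ) : ℝ := (par hdim hprec n).2
noncomputable def mm (n : ℕ) : ℕ := mstep hdim hprec (kk hdim hprec n) (dl hdim hprec n)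
noncomputable def MM (n : ℕ) : ℕ := mm hdim hprec n ^ d
noncomputable def KK (n : ℕ) : ℕ := Kc (kk hdim hprec n)

lemma kk_zero : kk hdim hprec 0 = 1 := rfl
lemma dl_zero : dl hdim hprec 0 = 1 := rfl

lemma kk_succ (n : ℕ) : kk hdim hprec (n+1) = kk hdim hprec n * mm hdim hprec n ^ d := rfl

lemma dl_succ (n : ℕ) :
    dl hdim hprec (n+1) = dl hdim hprec n / (KK hdim hprec n * (mm hdim hprec n + 1)) := rfl

lemma Kc_ge (k : ℕ) : 12 ≤ Kc k := by
  have : 1 ≤ 4 ^ k := Nat.one_le_pow _ _ (by norm_num)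
  calc 12 = 12 * 1 := by norm_num
  _ ≤ 12 * 4 ^ k := by exact Nat.mul_le_mul_left _ this

lemma mm_ge (n : ℕ) : 2 ≤ mm hdim hprec n := le_max_left _ _

lemma kk_pos (n : ℕ) : 0 < kk hdim hprec n := by
  induction n with
  | zero => norm_num [kk_zero]
  | succ n ih =>
    rw [kk_succ]
    have h2 : 0 < mm hdim hprec n ^ d := Nat.pow_pos (lt_of_lt_of_le (by norm_num) (mm_ge hdim hprec n))
    exact Nat.mul_pos ih h2

lemma dl_pos (n : ℕ) : 0 < dl hdim hprec n := by
  induction n with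
  | zero => norm_num [dl_zero]
  | succ n ih =>
    rw [dl_succ]
    apply div_pos ih
    have h1 : (12:ℝ) ≤ (KK hdim hprec n : ℝ) := by exact_mod_cast Kc_ge _
    have h2 : (0:ℝ) < (mm hdim hprec n : ℝ) + 1 := by positivity
    nlinarith

lemma dl_succ_le (n : ℕ) : dl hdim hprec (n+1) ≤ dl hdim hprec n / 36 := by
  rw [dl_succ]
  have hpos := dl_pos hdim hprec n
  have h1 : (12:ℝ) ≤ (KK hdim hprec n : ℝ) := by exact_mod_cast Kc_ge _
  have h2 : (3:ℝ) ≤ (mm hdim hprec n : ℝ) + 1 := by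
    have := mm_ge hdim hprec n
    have : (2:ℝ) ≤ (mm hdim hprec n : ℝ) := by exact_mod_cast this
    linarith
  apply div_le_div_of_nonneg_left (le_of_lt hpos) (by norm_num)
  nlinarith

lemma dl_anti (n : ℕ) : dl hdim hprec (n+1) ≤ dl hdim hprec n := by
  have := dl_succ_le hdim hprec n
  have := dl_pos hdim hprec n
  linarith

lemma dl_le_one (n : ℕ) : dl hdim hprec n ≤ 1 := by
  induction n with
  | zero => norm_num [dl_zero]
  | succ n ih => exact le_trans (dl_anti hdim hprec n) ih

lemma dl_le_pow (n : ℕ) : dl hdim hprec n ≤ (1/2) ^ n := by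
  induction n with
  | zero => norm_num [dl_zero]
  | succ n ih =>
    have h1 := dl_succ_le hdim hprec n
    have h2 : dl hdim hprec n / 36 ≤ (1/2)^n / 2 := by
      apply div_le_div₀ (by positivity) ih (by norm_num)
      norm_num
    calc dl hdim hprec (n+1) ≤ (1/2)^n / 2 := le_trans h1 h2
    _ = (1/2)^(n+1) := by ring

lemma dl_exists_lt {ε : ℝ} (hε : 0 < ε) : ∃ n, dl hdim hprec n < ε := by
  obtain ⟨n, hn⟩ := exists_pow_lt_of_lt_one hε (by norm_num : (1:ℝ)/2 < 1)
  exact ⟨n, lt_of_le_of_lt (dl_le_pow hdim hprec n) hn⟩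

lemma dl_next_le_rho (n : ℕ) :
    dl hdim hprec (n+1) ≤ rhoSel hdim hprec (Lc d (CC hdim hprec) (kk hdim hprec n) (dl hdim hprec n)) := by
  rw [dl_succ]
  set ρ := rhoSel hdim hprec (Lc d (CC hdim hprec) (kk hdim hprec n) (dl hdim hprec n)) with hρ
  have hρpos : 0 < ρ := rhoSel_pos hdim hprec _
  set δ := dl hdim hprec n with hδ
  have hδpos : 0 < δ := dl_pos hdim hprec n
  set K := (KK hdim hprec n : ℝ) with hK
  have hKpos : (0:ℝ) < K := by
    have h12 : ((12:ℕ):ℝ) ≤ ((KK hdim hprec n : ℕ) : ℝ) := by exact_mod_cast Kc_ge (kk hdim hprec n)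
    rw [hK]; norm_num at h12 ⊢; linarith
  set m := (mm hdim hprec n : ℝ) with hm
  have hmge : δ / (K * ρ) ≤ m := by
    have h1 : (⌈δ / (K * ρ)⌉₊ : ℝ) ≤ m := by
      rw [hm]
      exact_mod_cast (le_max_right 2 ⌈δ / (K * ρ)⌉₊ : ⌈δ / (K * ρ)⌉₊ ≤ mm hdim hprec n)
    exact le_trans (Nat.le_ceil _) h1
  have hmpos : (0:ℝ) < m := by
    have : ((2:ℕ):ℝ) ≤ m := by rw [hm]; exact_mod_cast mm_ge hdim hprec n
    norm_num at this; linarith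
  rw [div_le_iff₀ (by positivity)]
  rw [div_le_iff₀ (by positivity)] at hmge
  nlinarith

lemma KK_ge12 (n : ℕ) : 12 ≤ KK hdim hprec n := Kc_ge _

lemma KK_ge12R (n : ℕ) : (12:ℝ) ≤ (KK hdim hprec n : ℝ) := by
  exact_mod_cast KK_ge12 hdim hprec n

lemma mm_geR (n : ℕ) : (2:ℝ) ≤ (mm hdim hprec n : ℝ) := by
  exact_mod_cast mm_ge hdim hprec n

lemma kk_posR (n : ℕ) : (0:ℝ) < (kk hdim hprec n : ℝ) := by
  exact_mod_cast kk_pos hdim hprec n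

lemma dl_rel (n : ℕ) :
    dl hdim hprec n = dl hdim hprec (n+1) * (KK hdim hprec n * (mm hdim hprec n + 1)) := by
  rw [dl_succ]
  have h12 := KK_ge12R hdim hprec n
  have hm := mm_geR hdim hprec n
  have hKm : (0:ℝ) < (KK hdim hprec n : ℝ) * ((mm hdim hprec n : ℝ) + 1) := by nlinarith
  field_simp

lemma I_inv (n : ℕ) : ∀ t : ℝ, 0 < t → t ≤ dl hdim hprec n →
    12 ^ d * (t / dl hdim hprec n) ^ d ≤ CC hdim hprec * kk hdim hprec n * h t := by
  induction n with
  | zero =>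
    intro t ht ht1
    have := I_zero hdim hprec t ht (by simpa [dl_zero] using ht1)
    simpa [dl_zero, kk_zero] using this
  | succ n _ =>
    intro t ht ht1
    have hC := CC_pos (h := h) hdim hprec
    set C := CC hdim hprec with hCdef
    set k := (kk hdim hprec n : ℝ) with hk
    have hkpos : (0:ℝ) < k := by rw [hk]; exact_mod_cast kk_pos hdim hprec n
    set δ := dl hdim hprec n with hδ
    have hδpos : 0 < δ := dl_pos hdim hprec n
    set K := (KK hdim hprec n : ℝ) with hK
    have hKpos : (0:ℝ) < K := by
      have h12 : ((12:ℕ):ℝ) ≤ K := by rw [hK]; exact_mod_cast Kc_ge (kk hdim hprec n)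
      norm_num at h12; linarith
    set m := (mm hdim hprec n : ℝ) with hm
    have hmpos : (2:ℝ) ≤ m := by
      have : ((2:ℕ):ℝ) ≤ m := by rw [hm]; exact_mod_cast mm_ge hdim hprec n
      norm_num at this; linarith
    have hLt : Lc d C (kk hdim hprec n) δ * t ^ d ≤ h t := by
      apply rhoSel_spec hdim hprec _ t ht
      exact le_trans ht1 (dl_next_le_rho hdim hprec n)
    have hht : 0 < h t := hpos hdim t ht
    have hδ' : dl hdim hprec (n+1) = δ / (K * (m + 1)) := by
      rw [dl_succ]
    have hkk' : (kk hdim hprec (n+1) : ℝ) = k * m ^ d := by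
      rw [kk_succ]; push_cast; rfl
    rw [hδ', hkk']
    have hLc : Lc d C (kk hdim hprec n) δ = 12 ^ d * (2 * K) ^ d / (C * k * δ ^ d) := by
      unfold Lc; rw [hk, hK]; norm_num [KK]
    have key : C * (k * m ^ d) * (Lc d C (kk hdim hprec n) δ * t ^ d)
        = 12 ^ d * (2 * K * m * t / δ) ^ d := by
      rw [hLc, div_pow]
      field_simp
      ring
    have hmain : 12 ^ d * (t / (δ / (K * (m+1)))) ^ d ≤ 12 ^ d * (2 * K * m * t / δ) ^ d := by
      have h12 : (0:ℝ) < 12 ^ d := by positivity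
      apply mul_le_mul_of_nonneg_left _ (le_of_lt h12)
      apply pow_le_pow_left₀
      · positivity
      · rw [div_div_eq_mul_div]
        have hnum : t * (K * (m + 1)) ≤ 2 * K * m * t := by nlinarith [mul_nonneg (mul_nonneg hKpos.le ht.le) (by linarith : (0:ℝ) ≤ m - 1)]
        exact (div_le_div_iff_of_pos_right hδpos).mpr hnum
    have hfin : C * (k * m ^ d) * (Lc d C (kk hdim hprec n) δ * t ^ d)
        ≤ C * (k * m ^ d) * h t := by
      apply mul_le_mul_of_nonneg_left hLt
      positivity
    calc 12 ^ d * (t / (δ / (K * (m+1)))) ^ d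
        ≤ 12 ^ d * (2 * K * m * t / δ) ^ d := hmain
    _ = C * (k * m ^ d) * (Lc d C (kk hdim hprec n) δ * t ^ d) := key.symm
    _ ≤ C * (k * m ^ d) * h t := hfin
end Keleti2

namespace Keleti3
open Keleti Keleti2

def jdig (m r a : ℕ) : ℕ := r / m ^ a % m

lemma jdig_lt {m : ℕ} (hm : 0 < m) (r a : ℕ) : jdig m r a < m := Nat.mod_lt _ hm

lemma jdig_inj {m : ℕ} : ∀ (D r r' : ℕ), r < m ^ D → r' < m ^ D →
    (∀ a, a < D → jdig m r a = jdig m r' a) → r = r' := by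
  intro D
  induction D with
  | zero => intro r r' h1 h2 _; simp at h1 h2; omega
  | succ D ih =>
    intro r r' h1 h2 hdig
    have hm : 0 < m := by
      rcases Nat.eq_zero_or_pos m with h | h
      · subst h; simp at h1
      · exact h
    have h0 : r % m = r' % m := by
      have := hdig 0 (by omega)
      simpa [jdig] using this
    have hq : r / m = r' / m := by
      apply ih (r / m) (r' / m)
      · rw [Nat.div_lt_iff_lt_mul hm]; rw [pow_succ] at h1; exact h1
      · rw [Nat.div_lt_iff_lt_mul hm]; rw [pow_succ] at h2; exact h2
      · intro a ha
        have := hdig (a + 1) (by omega)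
        simpa [jdig, Nat.div_div_eq_div_mul, pow_succ, mul_comm] using this
    calc r = m * (r / m) + r % m := (Nat.div_add_mod r m).symm
    _ = m * (r' / m) + r' % m := by rw [hq, h0]
    _ = r' := Nat.div_add_mod r' m

lemma pow4_aux {a b c e : ℕ} (hab : a ≤ b) (hce : c ≤ e)
    (heq : 4 ^ a + 4 ^ b = 4 ^ c + 4 ^ e) : a = c ∧ b = e := by
  have hbe : b = e := by
    by_contra hne
    rcases Nat.lt_or_ge b e with hlt | hge
    · have h1 : (4:ℕ) ^ a ≤ 4 ^ b := Nat.pow_le_pow_right (by norm_num) hab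
      have h2 : (4:ℕ) ^ (b + 1) ≤ 4 ^ e := Nat.pow_le_pow_right (by norm_num) hlt
      have h3 : (4:ℕ) ^ (b+1) = 4 * 4 ^ b := by ring
      have h4 : 1 ≤ (4:ℕ) ^ b := Nat.one_le_pow _ _ (by norm_num)
      have h5 : 4 * 4 ^ b ≤ 2 * 4 ^ b := by
        calc 4 * 4 ^ b = 4 ^ (b+1) := h3.symm
        _ ≤ 4 ^ e := h2
        _ ≤ 4 ^ c + 4 ^ e := Nat.le_add_left _ _
        _ = 4 ^ a + 4 ^ b := heq.symm
        _ ≤ 2 * 4 ^ b := by omega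
      omega
    · have hlt : e < b := by omega
      have h1 : (4:ℕ) ^ c ≤ 4 ^ e := Nat.pow_le_pow_right (by norm_num) hce
      have h2 : (4:ℕ) ^ (e + 1) ≤ 4 ^ b := Nat.pow_le_pow_right (by norm_num) hlt
      have h3 : (4:ℕ) ^ (e+1) = 4 * 4 ^ e := by ring
      have h4 : 1 ≤ (4:ℕ) ^ e := Nat.one_le_pow _ _ (by norm_num)
      have h5 : 4 * 4 ^ e ≤ 2 * 4 ^ e := by
        calc 4 * 4 ^ e = 4 ^ (e+1) := h3.symm
        _ ≤ 4 ^ b := h2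
        _ ≤ 4 ^ a + 4 ^ b := Nat.le_add_left _ _
        _ = 4 ^ c + 4 ^ e := heq
        _ ≤ 2 * 4 ^ e := by omega
      omega
  subst hbe
  have : (4:ℕ) ^ a = 4 ^ c := by omega
  exact ⟨Nat.pow_right_injective (by norm_num) this, rfl⟩

lemma pow4 {a b c e : ℕ} (heq : 4 ^ a + 4 ^ b = 4 ^ c + 4 ^ e) :
    (a = c ∧ b = e) ∨ (a = e ∧ b = c) := by
  rcases le_total a b with h1 | h1 <;> rcases le_total c e with h2 | h2
  · exact Or.inl (pow4_aux h1 h2 heq)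
  · have := pow4_aux h1 h2 (by omega : 4 ^ a + 4 ^ b = 4 ^ e + 4 ^ c)
    exact Or.inr this
  · have := pow4_aux h1 h2 (by omega : 4 ^ b + 4 ^ a = 4 ^ c + 4 ^ e)
    exact Or.inr ⟨this.2, this.1⟩
  · have := pow4_aux h1 h2 (by omega : 4 ^ b + 4 ^ a = 4 ^ e + 4 ^ c)
    exact Or.inl ⟨this.2, this.1⟩

variable {d : ℕ} {h : ℝ → ℝ}
variable (hdim : IsDimFun h) (hprec : Prec h (fun x : ℝ => x ^ d))

/-- offset coefficient (a natural number) -/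
noncomputable def wb (n i : ℕ) (a : Fin d) : ℕ :=
  KK hdim hprec n * jdig (mm hdim hprec n) (i % MM hdim hprec n) (a : ℕ)
    + 3 * 4 ^ (i / MM hdim hprec n) * (if (a : ℕ) = 0 then 1 else 0)

noncomputable def center : ℕ → ℕ → Fin d → ℝ
  | 0, _, _ => 1 / 2
  | n + 1, i, a =>
      center n (i / MM hdim hprec n) a
        + (dl hdim hprec (n + 1) / 2 - dl hdim hprec n / 2)
        + dl hdim hprec (n + 1) * (wb hdim hprec n i a : ℝ)

lemma center_succ (n i : ℕ) (a : Fin d) :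
    center hdim hprec (n + 1) i a =
      center hdim hprec n (i / MM hdim hprec n) a
        + (dl hdim hprec (n + 1) / 2 - dl hdim hprec n / 2)
        + dl hdim hprec (n + 1) * (wb hdim hprec n i a : ℝ) := rfl

noncomputable def cell (n i : ℕ) : Set (EuclideanSpace ℝ (Fin d)) :=
  {x | ∀ a : Fin d, |x a - center hdim hprec n i a| ≤ dl hdim hprec n / 2}

lemma parent_lt {n i : ℕ} (hi : i < kk hdim hprec (n + 1)) :
    i / MM hdim hprec n < kk hdim hprec n := by
  have hM : 0 < MM hdim hprec n := by
    unfold MM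
    exact Nat.pow_pos (lt_of_lt_of_le (by norm_num) (mm_ge hdim hprec n))
  rw [Nat.div_lt_iff_lt_mul hM]
  rw [kk_succ] at hi
  calc i < kk hdim hprec n * mm hdim hprec n ^ d := hi
  _ = kk hdim hprec n * MM hdim hprec n := rfl
  _ ≤ _ := le_rfl

lemma wb_le {n i : ℕ} (hi : i < kk hdim hprec (n + 1)) (a : Fin d) :
    wb hdim hprec n i a ≤ KK hdim hprec n * mm hdim hprec n := by
  have h1 : jdig (mm hdim hprec n) (i % MM hdim hprec n) (a:ℕ) ≤ mm hdim hprec n - 1 := by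
    have := jdig_lt (lt_of_lt_of_le (by norm_num) (mm_ge hdim hprec n)) (i % MM hdim hprec n) (a:ℕ)
    omega
  have h2 : 3 * 4 ^ (i / MM hdim hprec n) ≤ KK hdim hprec n := by
    have hp := parent_lt hdim hprec hi
    have : (4:ℕ) ^ (i / MM hdim hprec n) ≤ 4 ^ (kk hdim hprec n) :=
      Nat.pow_le_pow_right (by norm_num) (le_of_lt hp)
    unfold KK Kc
    omega
  have hm2 := mm_ge hdim hprec n
  have hK12 := KK_ge12 hdim hprec n
  unfold wb
  calc KK hdim hprec n * jdig (mm hdim hprec n) (i % MM hdim hprec n) (a:ℕ)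
        + 3 * 4 ^ (i / MM hdim hprec n) * (if (a:ℕ) = 0 then 1 else 0)
      ≤ KK hdim hprec n * (mm hdim hprec n - 1) + KK hdim hprec n * 1 := by
        have hb : (3 * 4 ^ (i / MM hdim hprec n)) * (if (a:ℕ) = 0 then 1 else 0)
            ≤ KK hdim hprec n * 1 := by
          split <;> omega
        exact Nat.add_le_add (Nat.mul_le_mul_left _ h1) hb
  _ = KK hdim hprec n * (mm hdim hprec n - 1 + 1) := by ring
  _ = KK hdim hprec n * mm hdim hprec n := by
        congr 1; omega

/-- the offset of the child center relative to its parent center, bounds -/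
lemma offset_bounds {n i : ℕ} (hi : i < kk hdim hprec (n + 1)) (a : Fin d) :
    |center hdim hprec (n+1) i a - center hdim hprec n (i / MM hdim hprec n) a|
      ≤ dl hdim hprec n / 2 - dl hdim hprec (n+1) / 2 := by
  rw [center_succ]
  have hwb := wb_le hdim hprec hi a
  have hγ : 0 < dl hdim hprec (n+1) := dl_pos hdim hprec (n+1)
  have hδ : 0 < dl hdim hprec n := dl_pos hdim hprec n
  have hrel := dl_rel hdim hprec n
  set γ := dl hdim hprec (n+1)
  set δ := dl hdim hprec n
  set w := (wb hdim hprec n i a : ℝ)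
  have hw0 : 0 ≤ w := Nat.cast_nonneg _
  have hwK : w ≤ (KK hdim hprec n : ℝ) * (mm hdim hprec n : ℝ) := by
    have : ((wb hdim hprec n i a : ℕ) : ℝ) ≤ ((KK hdim hprec n * mm hdim hprec n : ℕ) : ℝ) := by
      exact_mod_cast hwb
    push_cast at this
    exact this
  have hK1 : (1:ℝ) ≤ (KK hdim hprec n : ℝ) := le_trans (by norm_num) (KK_ge12R hdim hprec n)
  rw [abs_le]
  constructor
  · have : 0 ≤ γ * w := mul_nonneg hγ.le hw0
    linarith
  · have h1 : γ * w ≤ γ * ((KK hdim hprec n : ℝ) * (mm hdim hprec n : ℝ)) :=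
      mul_le_mul_of_nonneg_left hwK hγ.le
    have h2 : γ * ((KK hdim hprec n : ℝ) * ((mm hdim hprec n : ℝ) + 1)) = δ := hrel.symm
    have h3 : γ * ((KK hdim hprec n : ℝ) * (mm hdim hprec n : ℝ)) = δ - γ * (KK hdim hprec n : ℝ) := by
      rw [← h2]; ring
    have h4 : γ ≤ γ * (KK hdim hprec n : ℝ) := by nlinarith
    linarith

lemma cell_subset {n i : ℕ} (hi : i < kk hdim hprec (n + 1)) :
    cell hdim hprec (n+1) i ⊆ cell hdim hprec n (i / MM hdim hprec n) := by
  intro x hx a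
  have h1 := hx a
  have h2 := offset_bounds hdim hprec hi a
  calc |x a - center hdim hprec n (i / MM hdim hprec n) a|
      ≤ |x a - center hdim hprec (n+1) i a|
        + |center hdim hprec (n+1) i a - center hdim hprec n (i / MM hdim hprec n) a| := by
        have := abs_sub_abs_le_abs_sub (x a) (center hdim hprec n (i / MM hdim hprec n) a)
        exact abs_sub_le _ _ _
  _ ≤ dl hdim hprec (n+1) / 2 + (dl hdim hprec n / 2 - dl hdim hprec (n+1) / 2) :=
        add_le_add h1 h2
  _ = dl hdim hprec n / 2 := by ring

end Keleti3

namespace Keleti4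
open Keleti Keleti2 Keleti3

lemma nat_dist_ge_one {p q : ℕ} (hpq : p ≠ q) : (1:ℝ) ≤ |(p:ℝ) - q| := by
  have h1 : (1:ℤ) ≤ |(p:ℤ) - q| := by
    have hq : (p:ℤ) ≠ q := by exact_mod_cast hpq
    rcases hq.lt_or_gt with hlt | hlt
    · rw [abs_of_neg (by linarith)]; omega
    · rw [abs_of_pos (by linarith)]; omega
  calc (1:ℝ) = ((1:ℤ):ℝ) := by norm_num
  _ ≤ |((p:ℤ) - (q:ℤ) : ℤ)| := by exact_mod_cast h1
  _ = |(p:ℝ) - q| := by push_cast; rfl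

variable {d : ℕ} {h : ℝ → ℝ}
variable (hdim : IsDimFun h) (hprec : Prec h (fun x : ℝ => x ^ d))

lemma MM_pos (n : ℕ) : 0 < MM hdim hprec n := by
  unfold MM
  exact Nat.pow_pos (lt_of_lt_of_le (by norm_num) (mm_ge hdim hprec n))

lemma center_diff_same_parent {n i i' : ℕ} (hp : i / MM hdim hprec n = i' / MM hdim hprec n)
    (a : Fin d) :
    center hdim hprec (n+1) i a - center hdim hprec (n+1) i' a
      = dl hdim hprec (n+1) * (KK hdim hprec n : ℝ) *
        ((jdig (mm hdim hprec n) (i % MM hdim hprec n) (a:ℕ) : ℝ)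
          - (jdig (mm hdim hprec n) (i' % MM hdim hprec n) (a:ℕ) : ℝ)) := by
  rw [center_succ, center_succ]
  unfold wb
  rw [hp]
  push_cast
  ring

lemma cells_far : ∀ n, ∀ i i', i < kk hdim hprec n → i' < kk hdim hprec n → i ≠ i' →
    ∀ x ∈ cell hdim hprec n i, ∀ y ∈ cell hdim hprec n i',
      ∃ a : Fin d, dl hdim hprec n ≤ |x a - y a| := by
  intro n
  induction n with
  | zero =>
    intro i i' hi hi' hne
    rw [kk_zero] at hi hi'
    omega
  | succ n ih =>
    intro i i' hi hi' hne x hx y hy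
    set M := MM hdim hprec n with hM
    by_cases hp : i / M = i' / M
    · have hMpos : 0 < M := MM_pos hdim hprec n
      have hmod : i % M ≠ i' % M := by
        intro hmm2
        apply hne
        calc i = M * (i / M) + i % M := (Nat.div_add_mod i M).symm
        _ = M * (i' / M) + i' % M := by rw [hp, hmm2]
        _ = i' := Nat.div_add_mod i' M
      have hdig : ¬ (∀ a, a < d → jdig (mm hdim hprec n) (i % M) a
          = jdig (mm hdim hprec n) (i' % M) a) := by
        intro hall
        exact hmod (jdig_inj d _ _ (Nat.mod_lt _ hMpos) (Nat.mod_lt _ hMpos) hall)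
      push_neg at hdig
      obtain ⟨a₀, ha₀d, hane⟩ := hdig
      set a : Fin d := ⟨a₀, ha₀d⟩ with ha
      refine ⟨a, ?_⟩
      have hdiff := center_diff_same_parent hdim hprec hp a
      have hone : (1:ℝ) ≤ |(jdig (mm hdim hprec n) (i % M) (a:ℕ) : ℝ)
          - (jdig (mm hdim hprec n) (i' % M) (a:ℕ) : ℝ)| := nat_dist_ge_one hane
      have hγ : 0 < dl hdim hprec (n+1) := dl_pos hdim hprec (n+1)
      have hK : (12:ℝ) ≤ (KK hdim hprec n : ℝ) := KK_ge12R hdim hprec n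
      have hcc : dl hdim hprec (n+1) * (KK hdim hprec n : ℝ)
          ≤ |center hdim hprec (n+1) i a - center hdim hprec (n+1) i' a| := by
        rw [hdiff, abs_mul]
        have h2 : |dl hdim hprec (n+1) * (KK hdim hprec n : ℝ)|
            = dl hdim hprec (n+1) * (KK hdim hprec n : ℝ) := by
          apply abs_of_pos; nlinarith
        rw [h2]
        nlinarith [mul_nonneg (mul_nonneg hγ.le (by linarith : (0:ℝ) ≤ (KK hdim hprec n : ℝ)))
          (by linarith : (0:ℝ) ≤ |(jdig (mm hdim hprec n) (i % M) (a:ℕ) : ℝ)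
            - (jdig (mm hdim hprec n) (i' % M) (a:ℕ) : ℝ)| - 1)]
      have hxa := hx a
      have hya := hy a
      have htri : |center hdim hprec (n+1) i a - center hdim hprec (n+1) i' a|
          ≤ |center hdim hprec (n+1) i a - x a| + (|x a - y a|
            + |y a - center hdim hprec (n+1) i' a|) :=
        le_trans (abs_sub_le _ (x a) _) (by
          have := abs_sub_le (x a) (y a) (center hdim hprec (n+1) i' a)
          linarith)
      rw [abs_sub_comm] at hxa
      have h3 : dl hdim hprec (n+1) * (KK hdim hprec n : ℝ) - dl hdim hprec (n+1)
          ≤ |x a - y a| := by linarith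
      nlinarith [mul_nonneg hγ.le (by linarith : (0:ℝ) ≤ (KK hdim hprec n : ℝ) - 2)]
    · obtain ⟨a, ha⟩ := ih (i / M) (i' / M) (parent_lt hdim hprec hi)
        (parent_lt hdim hprec hi') hp x (cell_subset hdim hprec hi hx)
        y (cell_subset hdim hprec hi' hy)
      exact ⟨a, le_trans (dl_anti hdim hprec n) ha⟩

lemma cell_disjoint {n i i' : ℕ} (hi : i < kk hdim hprec n) (hi' : i' < kk hdim hprec n)
    {x : EuclideanSpace ℝ (Fin d)} (hx : x ∈ cell hdim hprec n i)
    (hx' : x ∈ cell hdim hprec n i') : i = i' := by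
  by_contra hne
  obtain ⟨a, ha⟩ := cells_far hdim hprec n i i' hi hi' hne x hx x hx'
  simp at ha
  have := dl_pos hdim hprec n
  linarith

lemma coord_le_dist (x y : EuclideanSpace ℝ (Fin d)) (a : Fin d) :
    |x a - y a| ≤ dist x y := by
  have h1 : dist (x a) (y a) ^ 2 ≤ ∑ i, dist (x i) (y i) ^ 2 :=
    Finset.single_le_sum (f := fun i => dist (x i) (y i) ^ 2)
      (fun i _ => sq_nonneg _) (Finset.mem_univ a)
  calc |x a - y a| = dist (x a) (y a) := (Real.dist_eq _ _).symm
  _ = Real.sqrt (dist (x a) (y a) ^ 2) := (Real.sqrt_sq dist_nonneg).symm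
  _ ≤ Real.sqrt (∑ i, dist (x i) (y i) ^ 2) := Real.sqrt_le_sqrt h1
  _ = dist x y := (EuclideanSpace.dist_eq x y).symm

lemma dist_le_coords {x y : EuclideanSpace ℝ (Fin d)} {r : ℝ} (hr : 0 ≤ r)
    (hc : ∀ a, |x a - y a| ≤ r) : dist x y ≤ d * r := by
  rw [EuclideanSpace.dist_eq]
  have h1 : ∑ i, dist (x i) (y i) ^ 2 ≤ ∑ _i : Fin d, r ^ 2 := by
    apply Finset.sum_le_sum
    intro i _
    have := hc i
    rw [Real.dist_eq]
    nlinarith [abs_nonneg (x i - y i)]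
  have h2 : ∑ _i : Fin d, r ^ 2 = (d : ℝ) * r ^ 2 := by
    rw [Finset.sum_const, Finset.card_univ, Fintype.card_fin]
    simp [nsmul_eq_mul]
  have h3 : (d:ℝ) * r ^ 2 ≤ ((d:ℝ) * r) ^ 2 := by
    have hd0 : (0:ℝ) ≤ (d:ℝ) := Nat.cast_nonneg _
    have : (d:ℝ) ≤ (d:ℝ)^2 := by
      rcases Nat.eq_zero_or_pos d with h0 | h0
      · simp [h0]
      · have : (1:ℝ) ≤ (d:ℝ) := by exact_mod_cast h0
        nlinarith
    nlinarith [sq_nonneg r]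
  calc Real.sqrt (∑ i, dist (x i) (y i) ^ 2) ≤ Real.sqrt (((d:ℝ) * r) ^ 2) := by
        apply Real.sqrt_le_sqrt; linarith
  _ = (d:ℝ) * r := Real.sqrt_sq (by positivity)

end Keleti4

namespace Keleti5
open Keleti Keleti2 Keleti3 Keleti4

variable {d : ℕ} {h : ℝ → ℝ}
variable (hdim : IsDimFun h) (hprec : Prec h (fun x : ℝ => x ^ d))

noncomputable def EE : Set (EuclideanSpace ℝ (Fin d)) :=
  ⋂ n, ⋃ i ∈ Finset.range (kk hdim hprec n), cell hdim hprec n i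

lemma continuous_coord (a : Fin d) : Continuous (fun x : EuclideanSpace ℝ (Fin d) => x a) := by
  have hl : LipschitzWith 1 (fun x : EuclideanSpace ℝ (Fin d) => x a) := by
    apply LipschitzWith.of_dist_le_mul
    intro x y
    rw [NNReal.coe_one, one_mul, Real.dist_eq]
    exact coord_le_dist x y a

  exact hl.continuous

lemma cell_closed (n i : ℕ) : IsClosed (cell hdim hprec n i) := by
  have : cell hdim hprec n i =
      ⋂ a : Fin d, {x : EuclideanSpace ℝ (Fin d) |
        |x a - center hdim hprec n i a| ≤ dl hdim hprec n / 2} := by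
    ext x; simp [cell, Set.mem_iInter]
  rw [this]
  apply isClosed_iInter
  intro a
  apply isClosed_le _ continuous_const
  exact ((continuous_coord a).sub continuous_const).abs

lemma EE_closed : IsClosed (EE hdim hprec (d := d)) := by
  apply isClosed_iInter
  intro n
  apply Set.Finite.isClosed_biUnion (Finset.finite_toSet _)
  intro i _
  exact cell_closed hdim hprec n i

lemma same_cell_dist {n i : ℕ} {x y : EuclideanSpace ℝ (Fin d)}
    (hx : x ∈ cell hdim hprec n i) (hy : y ∈ cell hdim hprec n i) :
    dist x y ≤ d * dl hdim hprec n := by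
  apply dist_le_coords (dl_pos hdim hprec n).le
  intro a
  have h1 := hx a
  have h2 := hy a
  have := abs_sub_le (x a) (center hdim hprec n i a) (y a)
  rw [abs_sub_comm (center hdim hprec n i a) (y a)] at this
  linarith

lemma EE_compact : IsCompact (EE hdim hprec (d := d)) := by
  apply Metric.isCompact_of_isClosed_isBounded (EE_closed hdim hprec)
  have hsub : EE hdim hprec (d := d) ⊆ cell hdim hprec 0 0 := by
    intro x hx
    have := Set.mem_iInter.mp hx 0
    simp only [Set.mem_iUnion] at this
    obtain ⟨i, hi, hmem⟩ := this
    have : i < kk hdim hprec 0 := Finset.mem_range.mp hi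
    rw [kk_zero] at this
    interval_cases i
    exact hmem
  have hc : (WithLp.toLp 2 (center hdim hprec 0 0) : EuclideanSpace ℝ (Fin d)) ∈ cell hdim hprec 0 0 := by
    intro a
    have := (dl_pos hdim hprec 0).le
    simp only [PiLp.toLp_apply, sub_self, abs_zero]
    linarith
  have hball : cell hdim hprec 0 0 ⊆ Metric.closedBall
      (α := EuclideanSpace ℝ (Fin d)) (WithLp.toLp 2 (center hdim hprec 0 0)) (d * dl hdim hprec 0) := by
    intro x hx
    rw [Metric.mem_closedBall]
    exact same_cell_dist hdim hprec hx hc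
  exact (Metric.isBounded_closedBall).subset (hsub.trans hball)

/-- index of `t` at stage `n` -/
noncomputable def idx (n : ℕ) (t : ℝ) : ℕ := ⌊t * kk hdim hprec n⌋₊

lemma idx_lt {t : ℝ} (h0 : 0 ≤ t) (h1 : t < 1) (n : ℕ) :
    idx hdim hprec n t < kk hdim hprec n := by
  unfold idx
  rw [Nat.floor_lt (by positivity)]
  have := kk_posR hdim hprec n
  nlinarith

lemma idx_consistent {t : ℝ} (h0 : 0 ≤ t) (n : ℕ) :
    idx hdim hprec (n+1) t / MM hdim hprec n = idx hdim hprec n t := by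
  unfold idx
  have hM : (0:ℕ) < MM hdim hprec n := MM_pos hdim hprec n
  have h1 : (t * kk hdim hprec (n+1)) / (MM hdim hprec n : ℝ) = t * kk hdim hprec n := by
    rw [kk_succ]
    have : ((kk hdim hprec n * mm hdim hprec n ^ d : ℕ) : ℝ)
        = (kk hdim hprec n : ℝ) * (MM hdim hprec n : ℝ) := by
      push_cast [MM]; ring
    rw [this]
    field_simp
  calc ⌊t * kk hdim hprec (n+1)⌋₊ / MM hdim hprec n
      = ⌊t * kk hdim hprec (n+1) / (MM hdim hprec n : ℝ)⌋₊ := (Nat.floor_div_natCast _ _).symm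
  _ = ⌊t * kk hdim hprec n⌋₊ := by rw [h1]

noncomputable def gn (n : ℕ) (t : ℝ) : EuclideanSpace ℝ (Fin d) :=
  WithLp.toLp 2 (center hdim hprec n (idx hdim hprec n t))

lemma gn_mem (n : ℕ) (t : ℝ) : gn hdim hprec n t ∈ cell hdim hprec n (idx hdim hprec n t) := by
  intro a
  have := (dl_pos hdim hprec n).le
  simp only [gn, PiLp.toLp_apply, sub_self, abs_zero]
  linarith

lemma cell_chain {t : ℝ} (h0 : 0 ≤ t) (h1 : t < 1) :
    ∀ N n, n ≤ N → cell hdim hprec N (idx hdim hprec N t) ⊆ cell hdim hprec n (idx hdim hprec n t) := by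
  intro N
  induction N with
  | zero => intro n hn; rw [Nat.le_zero.mp hn]
  | succ N ih =>
    intro n hn
    rcases Nat.eq_or_lt_of_le hn with heq | hlt
    · rw [heq]
    · have hstep : cell hdim hprec (N+1) (idx hdim hprec (N+1) t)
          ⊆ cell hdim hprec N (idx hdim hprec N t) := by
        have := cell_subset hdim hprec (idx_lt hdim hprec h0 h1 (N+1))
        rwa [idx_consistent hdim hprec h0 N] at this
      exact le_trans hstep (ih n (by omega))

lemma gn_mem_earlier {t : ℝ} (h0 : 0 ≤ t) (h1 : t < 1) {n N : ℕ} (hn : n ≤ N) :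
    gn hdim hprec N t ∈ cell hdim hprec n (idx hdim hprec n t) :=
  cell_chain hdim hprec h0 h1 N n hn (gn_mem hdim hprec N t)

lemma gn_cauchy {t : ℝ} (h0 : 0 ≤ t) (h1 : t < 1) :
    CauchySeq (fun n => gn hdim hprec n t) := by
  apply cauchySeq_of_le_geometric (1/2 : ℝ) (d : ℝ)
  · norm_num
  · intro n
    have hx := gn_mem_earlier hdim hprec h0 h1 (le_refl n)
    have hy := gn_mem_earlier hdim hprec h0 h1 (Nat.le_succ n)
    have := same_cell_dist hdim hprec hx hy
    have h2 := dl_le_pow hdim hprec n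
    have hd0 : (0:ℝ) ≤ (d:ℝ) := Nat.cast_nonneg _
    calc dist (gn hdim hprec n t) (gn hdim hprec (n+1) t)
        = dist (gn hdim hprec (n+1) t) (gn hdim hprec n t) := dist_comm _ _
    _ ≤ d * dl hdim hprec n := same_cell_dist hdim hprec hy hx
    _ ≤ d * (1/2)^n := by nlinarith
    _ = d * (1/2)^n := rfl

noncomputable def gl (t : ℝ) : EuclideanSpace ℝ (Fin d) :=
  limUnder atTop (fun n => gn hdim hprec n t)

lemma gl_tendsto {t : ℝ} (h0 : 0 ≤ t) (h1 : t < 1) :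
    Tendsto (fun n => gn hdim hprec n t) atTop (nhds (gl hdim hprec t)) :=
  (gn_cauchy hdim hprec h0 h1).tendsto_limUnder

lemma gl_mem_cell {t : ℝ} (h0 : 0 ≤ t) (h1 : t < 1) (n : ℕ) :
    gl hdim hprec t ∈ cell hdim hprec n (idx hdim hprec n t) := by
  apply (cell_closed hdim hprec n _).mem_of_tendsto (gl_tendsto hdim hprec h0 h1)
  filter_upwards [eventually_ge_atTop n] with N hN
  exact gn_mem_earlier hdim hprec h0 h1 hN

lemma gl_mem_EE {t : ℝ} (h0 : 0 ≤ t) (h1 : t < 1) : gl hdim hprec t ∈ EE hdim hprec (d := d) := by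
  apply Set.mem_iInter.mpr
  intro n
  simp only [Set.mem_iUnion]
  exact ⟨idx hdim hprec n t, Finset.mem_range.mpr (idx_lt hdim hprec h0 h1 n),
    gl_mem_cell hdim hprec h0 h1 n⟩

lemma gn_measurable (n : ℕ) : Measurable (gn hdim hprec n (d := d)) := by
  have h1 : Measurable fun t : ℝ => ⌊t * kk hdim hprec n⌋₊ :=
    Nat.measurable_floor.comp (measurable_id.mul_const _)
  exact (measurable_from_nat (f := fun i => (WithLp.toLp 2 (center hdim hprec n i) : EuclideanSpace ℝ (Fin d)))).comp h1

lemma gl_aemeasurable :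
    AEMeasurable (gl hdim hprec (d := d)) (volume.restrict (Set.Ico (0:ℝ) 1)) := by
  apply aemeasurable_of_tendsto_metrizable_ae' (f := fun n => gn hdim hprec n (d := d))
  · exact fun n => (gn_measurable hdim hprec n).aemeasurable
  · rw [MeasureTheory.ae_restrict_iff' measurableSet_Ico]
    apply MeasureTheory.ae_of_all
    intro t ht
    exact gl_tendsto hdim hprec ht.1 ht.2

noncomputable def mu : Measure (EuclideanSpace ℝ (Fin d)) :=
  Measure.map (gl hdim hprec) (volume.restrict (Set.Ico (0:ℝ) 1))

lemma mu_EE : mu hdim hprec (EE hdim hprec (d := d)) = 1 := by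
  unfold mu
  rw [Measure.map_apply_of_aemeasurable (gl_aemeasurable hdim hprec)
    (EE_closed hdim hprec).measurableSet]
  rw [Measure.restrict_apply' measurableSet_Ico]
  have hsub : Set.Ico (0:ℝ) 1 ⊆ gl hdim hprec (d := d) ⁻¹' (EE hdim hprec) := by
    intro t ht
    exact gl_mem_EE hdim hprec ht.1 ht.2
  have : gl hdim hprec (d := d) ⁻¹' (EE hdim hprec) ∩ Set.Ico 0 1 = Set.Ico (0:ℝ) 1 := by
    apply Set.inter_eq_self_of_subset_right hsub
  rw [this, Real.volume_Ico]
  norm_num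

lemma preimage_bound (n : ℕ) (S : Set (EuclideanSpace ℝ (Fin d))) (J : Finset ℕ)
    (hJ : ∀ t, t ∈ Set.Ico (0:ℝ) 1 → gl hdim hprec t ∈ S → idx hdim hprec n t ∈ J) :
    volume.restrict (Set.Ico (0:ℝ) 1) (gl hdim hprec (d := d) ⁻¹' S)
      ≤ J.card * ENNReal.ofReal (1 / kk hdim hprec n) := by
  rw [Measure.restrict_apply' measurableSet_Ico]
  have hsub : gl hdim hprec (d := d) ⁻¹' S ∩ Set.Ico 0 1
      ⊆ ⋃ i ∈ J, Set.Ico ((i:ℝ) / kk hdim hprec n) (((i:ℝ)+1) / kk hdim hprec n) := by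
    intro t ⟨htS, ht⟩
    have hiJ := hJ t ht htS
    apply Set.mem_biUnion hiJ
    have hkpos := kk_posR hdim hprec n
    have hfl : (idx hdim hprec n t : ℝ) ≤ t * kk hdim hprec n :=
      Nat.floor_le (by nlinarith [ht.1])
    have hfl2 : t * kk hdim hprec n < (idx hdim hprec n t : ℝ) + 1 := Nat.lt_floor_add_one _
    constructor
    · rw [div_le_iff₀ hkpos]; nlinarith
    · rw [lt_div_iff₀ hkpos]; nlinarith
  calc volume (gl hdim hprec (d := d) ⁻¹' S ∩ Set.Ico 0 1)
      ≤ volume (⋃ i ∈ J, Set.Ico ((i:ℝ) / kk hdim hprec n) (((i:ℝ)+1) / kk hdim hprec n)) :=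
        measure_mono hsub
  _ ≤ ∑ i ∈ J, volume (Set.Ico ((i:ℝ) / kk hdim hprec n) (((i:ℝ)+1) / kk hdim hprec n)) :=
        measure_biUnion_finset_le _ _
  _ = ∑ _i ∈ J, ENNReal.ofReal (1 / kk hdim hprec n) := by
        apply Finset.sum_congr rfl
        intro i _
        rw [Real.volume_Ico]
        congr 1
        have hkpos := kk_posR hdim hprec n
        field_simp
        ring
  _ = J.card * ENNReal.ofReal (1 / kk hdim hprec n) := by
        rw [Finset.sum_const, nsmul_eq_mul]

end Keleti5

namespace Keleti6
open Keleti Keleti2 Keleti3 Keleti4 Keleti5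

variable {d : ℕ} {h : ℝ → ℝ}
variable (hdim : IsDimFun h) (hprec : Prec h (fun x : ℝ => x ^ d))

lemma kk_ge_two_pow (hd : 0 < d) (n : ℕ) : 2 ^ n ≤ kk hdim hprec n := by
  induction n with
  | zero => simp [kk_zero]
  | succ n ih =>
    rw [kk_succ, pow_succ]
    have h1 : 2 ≤ mm hdim hprec n ^ d := by
      calc 2 = 2 ^ 1 := by norm_num
      _ ≤ 2 ^ d := Nat.pow_le_pow_right (by norm_num) hd
      _ ≤ mm hdim hprec n ^ d := Nat.pow_le_pow_left (mm_ge hdim hprec n) d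
    exact Nat.mul_le_mul ih h1

lemma mu_le_one (S : Set (EuclideanSpace ℝ (Fin d))) : mu hdim hprec S ≤ 1 := by
  unfold mu
  calc Measure.map (gl hdim hprec) (volume.restrict (Set.Ico (0:ℝ) 1)) S
      ≤ Measure.map (gl hdim hprec) (volume.restrict (Set.Ico (0:ℝ) 1)) Set.univ :=
        measure_mono (Set.subset_univ _)
  _ = volume.restrict (Set.Ico (0:ℝ) 1) Set.univ := by
      rw [Measure.map_apply_of_aemeasurable (gl_aemeasurable hdim hprec) MeasurableSet.univ]
      simp
  _ = 1 := by rw [Measure.restrict_apply' measurableSet_Ico]; simp [Real.volume_Ico]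

lemma mu_singleton (hd : 0 < d) (x : EuclideanSpace ℝ (Fin d)) : mu hdim hprec {x} = 0 := by
  classical
  have hbound : ∀ n : ℕ, mu hdim hprec {x} ≤ ENNReal.ofReal (1 / kk hdim hprec n) := by
    intro n
    set J : Finset ℕ := (Finset.range (kk hdim hprec n)).filter (fun i => x ∈ cell hdim hprec n i)
      with hJdef
    have hJcard : J.card ≤ 1 := by
      rw [Finset.card_le_one]
      intro i hi i' hi'
      rw [hJdef, Finset.mem_filter, Finset.mem_range] at hi hi'
      exact cell_disjoint hdim hprec hi.1 hi'.1 hi.2 hi'.2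
    have hmap : mu hdim hprec {x}
        = volume.restrict (Set.Ico (0:ℝ) 1) (gl hdim hprec (d := d) ⁻¹' {x}) := by
      unfold mu
      rw [Measure.map_apply_of_aemeasurable (gl_aemeasurable hdim hprec)
        (measurableSet_singleton x)]
    rw [hmap]
    calc volume.restrict (Set.Ico (0:ℝ) 1) (gl hdim hprec (d := d) ⁻¹' {x})
        ≤ J.card * ENNReal.ofReal (1 / kk hdim hprec n) := by
          apply preimage_bound hdim hprec n {x} J
          intro t ht hglt
          rw [hJdef, Finset.mem_filter, Finset.mem_range]
          refine ⟨idx_lt hdim hprec ht.1 ht.2 n, ?_⟩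
          have := gl_mem_cell hdim hprec ht.1 ht.2 n
          rwa [Set.mem_singleton_iff.mp hglt] at this
    _ ≤ 1 * ENNReal.ofReal (1 / kk hdim hprec n) := by
          apply mul_le_mul_left
          exact_mod_cast hJcard
    _ = ENNReal.ofReal (1 / kk hdim hprec n) := one_mul _
  have hfin : mu hdim hprec {x} ≠ ⊤ :=
    ne_top_of_le_ne_top ENNReal.one_ne_top (mu_le_one hdim hprec {x})
  set r := (mu hdim hprec {x}).toReal with hr
  have hrle : ∀ n : ℕ, r ≤ (1/2) ^ n := by
    intro n
    have h1 := hbound n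
    have h2 : r ≤ 1 / kk hdim hprec n := by
      have := ENNReal.toReal_mono ENNReal.ofReal_ne_top h1
      rwa [ENNReal.toReal_ofReal (by positivity)] at this
    have h3 : (2:ℝ) ^ n ≤ kk hdim hprec n := by
      exact_mod_cast kk_ge_two_pow hdim hprec hd n
    have h4 : (0:ℝ) < 2 ^ n := by positivity
    have hkpos := kk_posR hdim hprec n
    calc r ≤ 1 / kk hdim hprec n := h2
    _ ≤ 1 / 2 ^ n := by apply div_le_div_of_nonneg_left (by norm_num) h4 h3
    _ = (1/2) ^ n := by rw [div_pow, one_pow]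
  have hr0 : r ≤ 0 := by
    apply ge_of_tendsto' (tendsto_pow_atTop_nhds_zero_of_lt_one (by norm_num : (0:ℝ) ≤ 1/2)
      (by norm_num : (1:ℝ)/2 < 1)) hrle
  have : r = 0 := le_antisymm hr0 ENNReal.toReal_nonneg
  rw [hr] at this
  exact (ENNReal.toReal_eq_zero_iff _).mp this |>.resolve_right hfin

set_option maxHeartbeats 1000000 in
lemma mass_bound (hd : 0 < d) (S : Set (EuclideanSpace ℝ (Fin d)))
    (hdiam : EMetric.diam S ≤ ENNReal.ofReal (dl hdim hprec 1)) :
    mu hdim hprec S ≤ ENNReal.ofReal (CC hdim hprec * h ((EMetric.diam S).toReal)) := by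
  classical
  set T := closure S with hT
  have hdT : EMetric.diam T = EMetric.diam S := EMetric.diam_closure S
  have hred : mu hdim hprec S ≤ mu hdim hprec T := measure_mono subset_closure
  set t := (EMetric.diam S).toReal with htdef
  have hdl1 : 0 < dl hdim hprec 1 := dl_pos hdim hprec 1
  have hne : EMetric.diam S ≠ ⊤ := by
    apply ne_top_of_le_ne_top ENNReal.ofReal_ne_top hdiam
  have htnn : 0 ≤ t := ENNReal.toReal_nonneg
  have htle : t ≤ dl hdim hprec 1 := by
    have := ENNReal.toReal_mono ENNReal.ofReal_ne_top hdiam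
    rwa [ENNReal.toReal_ofReal hdl1.le] at this
  have hdistT : ∀ x ∈ T, ∀ y ∈ T, dist x y ≤ t := by
    intro x hx y hy
    have h1 := EMetric.edist_le_diam_of_mem hx hy
    rw [show Metric.ediam T = EMetric.diam T from rfl, hdT] at h1
    rw [dist_edist]
    exact ENNReal.toReal_mono hne h1
  rcases eq_or_lt_of_le htnn with h0 | htpos
  · -- t = 0 : subsingleton
    have hd0 : EMetric.diam S = 0 := by
      rcases (ENNReal.toReal_eq_zero_iff _).mp h0.symm with h | h
      · exact h
      · exact absurd h hne
    have hsub : T.Subsingleton := by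
      rw [← EMetric.diam_eq_zero_iff, show Metric.ediam T = EMetric.diam T from rfl, hdT]
      exact hd0
    rcases Set.eq_empty_or_nonempty T with hTe | ⟨y, hy⟩
    · have : mu hdim hprec S ≤ mu hdim hprec T := hred
      rw [hTe] at this
      simp only [measure_empty, nonpos_iff_eq_zero] at this
      rw [this]
      exact zero_le
    · have hTy : T ⊆ {y} := fun z hz => hsub hz hy
      have : mu hdim hprec S ≤ mu hdim hprec {y} :=
        le_trans hred (measure_mono hTy)
      rw [mu_singleton hdim hprec hd y] at this
      simp only [nonpos_iff_eq_zero] at this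
      rw [this]
      exact zero_le
  · -- 0 < t
    have hPex : ∃ n, dl hdim hprec n ≤ t := by
      obtain ⟨n, hn⟩ := dl_exists_lt hdim hprec htpos
      exact ⟨n, hn.le⟩
    obtain ⟨n, hlt, hge⟩ : ∃ n, t < dl hdim hprec n ∧ dl hdim hprec (n+1) ≤ t := by
      have hn₀spec : dl hdim hprec (Nat.find hPex) ≤ t := Nat.find_spec hPex
      have hn₀ne : Nat.find hPex ≠ 0 := by
        intro hzero
        rw [hzero, dl_zero] at hn₀spec
        have h36 : dl hdim hprec 1 ≤ 1 / 36 := by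
          have := dl_succ_le hdim hprec 0
          rw [dl_zero] at this
          linarith
        linarith
      refine ⟨Nat.find hPex - 1, ?_, ?_⟩
      · have hmin := Nat.find_min hPex (m := Nat.find hPex - 1) (by omega)
        exact lt_of_not_ge hmin
      · have heq1 : Nat.find hPex - 1 + 1 = Nat.find hPex := by omega
        rw [heq1]
        exact hn₀spec
    set γ := dl hdim hprec (n+1) with hγdef
    set K := (KK hdim hprec n : ℝ) with hKdef
    set M := MM hdim hprec n with hMdef
    set m := mm hdim hprec n with hmdef
    set δ := dl hdim hprec n with hδdef
    have hγpos : 0 < γ := dl_pos hdim hprec (n+1)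
    have hKR : (12:ℝ) ≤ K := KK_ge12R hdim hprec n
    have hδpos : 0 < δ := dl_pos hdim hprec n
    have hsK : 0 < γ * K := by nlinarith
    have hMpos : 0 < M := MM_pos hdim hprec n
    set J : Finset ℕ := (Finset.range (kk hdim hprec (n+1))).filter
      (fun i => (cell hdim hprec (n+1) i ∩ T).Nonempty) with hJdef
    have hmuT : mu hdim hprec T ≤ J.card * ENNReal.ofReal (1 / kk hdim hprec (n+1)) := by
      unfold mu
      rw [Measure.map_apply_of_aemeasurable (gl_aemeasurable hdim hprec)
        isClosed_closure.measurableSet]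
      apply preimage_bound hdim hprec (n+1) T J
      intro t' ht' hglt'
      rw [hJdef, Finset.mem_filter, Finset.mem_range]
      exact ⟨idx_lt hdim hprec ht'.1 ht'.2 (n+1),
        ⟨gl hdim hprec t', gl_mem_cell hdim hprec ht'.1 ht'.2 (n+1), hglt'⟩⟩
    rcases J.eq_empty_or_nonempty with hJe | ⟨i₀, hi₀⟩
    · rw [hJe] at hmuT
      simp only [Finset.card_empty, Nat.cast_zero, zero_mul, nonpos_iff_eq_zero] at hmuT
      calc mu hdim hprec S ≤ mu hdim hprec T := hred
      _ = 0 := hmuT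
      _ ≤ _ := zero_le
    · -- nonempty: same parent
      have hmemJ : ∀ i ∈ J, i < kk hdim hprec (n+1)
          ∧ ∃ x, x ∈ cell hdim hprec (n+1) i ∧ x ∈ T := by
        intro i hi
        rw [hJdef, Finset.mem_filter, Finset.mem_range] at hi
        exact ⟨hi.1, hi.2⟩
      have hpar : ∀ i ∈ J, i / M = i₀ / M := by
        intro i hi
        by_contra hne'
        obtain ⟨hilt, x, hxc, hxT⟩ := hmemJ i hi
        obtain ⟨hi₀lt, y, hyc, hyT⟩ := hmemJ i₀ hi₀
        obtain ⟨a, ha⟩ := cells_far hdim hprec n (i / M) (i₀ / M)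
          (parent_lt hdim hprec hilt) (parent_lt hdim hprec hi₀lt) hne'
          x (cell_subset hdim hprec hilt hxc) y (cell_subset hdim hprec hi₀lt hyc)
        have h1 : |x a - y a| ≤ dist x y := coord_le_dist x y a
        have h2 : dist x y ≤ t := hdistT x hxT y hyT
        have : δ ≤ t := le_trans ha (le_trans h1 h2)
        linarith
      set B := ⌊(t + γ) / (γ * K)⌋₊ with hBdef
      have hBle : (B:ℝ) ≤ (t + γ) / (γ * K) := Nat.floor_le (by positivity)
      have hdigb : ∀ i ∈ J, ∀ a : Fin d,
          jdig m (i % M) (a:ℕ) ≤ jdig m (i₀ % M) (a:ℕ) + B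
          ∧ jdig m (i₀ % M) (a:ℕ) ≤ jdig m (i % M) (a:ℕ) + B := by
        intro i hi a
        obtain ⟨hilt, x, hxc, hxT⟩ := hmemJ i hi
        obtain ⟨hi₀lt, y, hyc, hyT⟩ := hmemJ i₀ hi₀
        have hcd := center_diff_same_parent hdim hprec (hpar i hi) a
        have hxa := hxc a
        have hya := hyc a
        have htri : |center hdim hprec (n+1) i a - center hdim hprec (n+1) i₀ a|
            ≤ t + γ := by
          have t1 : |center hdim hprec (n+1) i a - center hdim hprec (n+1) i₀ a|
              ≤ |center hdim hprec (n+1) i a - x a| + (|x a - y a|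
                + |y a - center hdim hprec (n+1) i₀ a|) :=
            le_trans (abs_sub_le _ (x a) _) (by
              have := abs_sub_le (x a) (y a) (center hdim hprec (n+1) i₀ a)
              linarith)
          rw [abs_sub_comm] at hxa
          have h2 : |x a - y a| ≤ t := le_trans (coord_le_dist x y a) (hdistT x hxT y hyT)
          linarith
        rw [hcd, abs_mul, abs_of_pos (by nlinarith : (0:ℝ) < γ * K)] at htri
        have hq : |(jdig m (i % M) (a:ℕ) : ℝ) - (jdig m (i₀ % M) (a:ℕ) : ℝ)|
            ≤ (t + γ) / (γ * K) := by
          rw [le_div_iff₀ hsK]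
          nlinarith [abs_nonneg ((jdig m (i % M) (a:ℕ) : ℝ) - (jdig m (i₀ % M) (a:ℕ) : ℝ))]
        have hqB : (t + γ) / (γ * K) < B + 1 := Nat.lt_floor_add_one _
        rw [abs_le] at hq
        constructor
        · have hr1 : (jdig m (i % M) (a:ℕ) : ℝ)
              < ((jdig m (i₀ % M) (a:ℕ) + B + 1 : ℕ) : ℝ) := by push_cast; linarith
          have hnat : jdig m (i % M) (a:ℕ) < jdig m (i₀ % M) (a:ℕ) + B + 1 :=
            Nat.cast_lt.mp hr1
          omega
        · have hr1 : (jdig m (i₀ % M) (a:ℕ) : ℝ)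
              < ((jdig m (i % M) (a:ℕ) + B + 1 : ℕ) : ℝ) := by push_cast; linarith
          have hnat : jdig m (i₀ % M) (a:ℕ) < jdig m (i % M) (a:ℕ) + B + 1 :=
            Nat.cast_lt.mp hr1
          omega
      have hcard : J.card ≤ (2*B+1)^d := by
        have hinj : Set.InjOn
            (fun i => fun a : Fin d => jdig m (i % M) (a:ℕ) + B - jdig m (i₀ % M) (a:ℕ))
            (J : Set ℕ) := by
          intro i hi i' hi' heq
          have hdigeq : ∀ a : Fin d, jdig m (i % M) (a:ℕ) = jdig m (i' % M) (a:ℕ) := by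
            intro a
            have h1 := congrFun heq a
            have h2 := (hdigb i hi a).2
            have h3 := (hdigb i' hi' a).2
            simp only at h1
            omega
          have hmod : i % M = i' % M := by
            apply jdig_inj d
            · exact Nat.mod_lt _ hMpos
            · exact Nat.mod_lt _ hMpos
            · intro a ha
              exact hdigeq ⟨a, ha⟩
          have hdiv : i / M = i' / M := by
            rw [hpar i hi, hpar i' hi']
          calc i = M * (i / M) + i % M := (Nat.div_add_mod i M).symm
          _ = M * (i' / M) + i' % M := by rw [hdiv, hmod]
          _ = i' := Nat.div_add_mod i' M
        have hmem : ∀ i ∈ J, (fun a : Fin d => jdig m (i % M) (a:ℕ) + B - jdig m (i₀ % M) (a:ℕ))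
            ∈ Fintype.piFinset (fun _ : Fin d => Finset.range (2*B+1)) := by
          intro i hi
          rw [Fintype.mem_piFinset]
          intro a
          rw [Finset.mem_range]
          have h2 := (hdigb i hi a).1
          have h3 := (hdigb i hi a).2
          omega
        calc J.card ≤ (Fintype.piFinset (fun _ : Fin d => Finset.range (2*B+1))).card :=
              Finset.card_le_card_of_injOn _ hmem hinj
        _ = (2*B+1)^d := by
              rw [Fintype.card_piFinset]
              simp [Finset.prod_const]
      -- the real inequality
      have hkkpos := kk_posR hdim hprec (n+1)
      have hkpos := kk_posR hdim hprec n
      have hht : 0 < h t := hpos hdim t htpos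
      have hCC := CC_pos (h := h) hdim hprec
      have hreal : ((2*B+1 : ℕ) : ℝ)^d * (1 / (kk hdim hprec (n+1) : ℝ))
          ≤ CC hdim hprec * h t := by
        have hkk1 : (kk hdim hprec (n+1) : ℝ) = kk hdim hprec n * (m:ℝ)^d := by
          rw [kk_succ]; push_cast; rfl
        rw [mul_one_div, div_le_iff₀ hkkpos]
        rcases lt_or_ge t (γ * K) with hc | hc
        · -- small t
          have hq2 : (t + γ) / (γ * K) < 2 := by
            rw [div_lt_iff₀ hsK]
            nlinarith
          have hB1 : B ≤ 1 := by
            by_contra hB2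
            push_neg at hB2
            have : (2:ℝ) ≤ (B:ℝ) := by exact_mod_cast hB2
            linarith
          have h3d : ((2*B+1 : ℕ) : ℝ)^d ≤ 3^d := by
            apply pow_le_pow_left₀ (by positivity)
            have : 2*B+1 ≤ 3 := by omega
            exact_mod_cast this
          have hI := I_inv hdim hprec (n+1) γ hγpos (le_refl _)
          rw [div_self (ne_of_gt hγpos), one_pow, mul_one] at hI
          have hmono2 : h γ ≤ h t := hmono hdim γ t hγpos.le hge
          have h12d : (3:ℝ)^d ≤ 12^d := pow_le_pow_left₀ (by norm_num) (by norm_num) d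
          calc ((2*B+1 : ℕ) : ℝ)^d ≤ 3^d := h3d
          _ ≤ 12^d := h12d
          _ ≤ CC hdim hprec * kk hdim hprec (n+1) * h γ := hI
          _ ≤ CC hdim hprec * kk hdim hprec (n+1) * h t := by
              apply mul_le_mul_of_nonneg_left hmono2
              positivity
          _ = CC hdim hprec * h t * kk hdim hprec (n+1) := by ring
        · -- large t
          have hsrel : γ * K = δ / ((m:ℝ) + 1) := by
            have hrel := dl_rel hdim hprec n
            have hm1 : (0:ℝ) < (m:ℝ) + 1 := by positivity
            rw [eq_div_iff (ne_of_gt hm1)]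
            calc γ * K * ((m:ℝ) + 1) = γ * (K * ((m:ℝ)+1)) := by ring
            _ = δ := hrel.symm
          have hmge2 : (2:ℝ) ≤ (m:ℝ) := mm_geR hdim hprec n
          have h1led : (1:ℝ) ≤ t / (γ*K) := by
            rw [le_div_iff₀ hsK]; linarith
          have hBle2 : (B:ℝ) ≤ 2*t/(γ*K) := by
            calc (B:ℝ) ≤ (t + γ)/(γ*K) := hBle
            _ ≤ 2*t/(γ*K) := by
                apply (div_le_div_iff_of_pos_right hsK).mpr
                linarith
          have h2B : (2*(B:ℝ)+1 : ℝ) ≤ 5*t/(γ*K) := by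
            have : 5*t/(γ*K) = 4*t/(γ*K) + t/(γ*K) := by ring
            rw [this]
            have h4 : 2*(B:ℝ) ≤ 4*t/(γ*K) := by
              calc 2*(B:ℝ) ≤ 2*(2*t/(γ*K)) := by linarith
              _ = 4*t/(γ*K) := by ring
            linarith
          have h2B' : (2*(B:ℝ)+1 : ℝ) ≤ 12*t*(m:ℝ)/δ := by
            calc (2*(B:ℝ)+1 : ℝ) ≤ 5*t/(γ*K) := h2B
            _ = 5*t*((m:ℝ)+1)/δ := by
                rw [hsrel, div_div_eq_mul_div]
            _ ≤ 12*t*(m:ℝ)/δ := by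
                apply (div_le_div_iff_of_pos_right hδpos).mpr
                nlinarith [mul_nonneg htpos.le (by linarith : (0:ℝ) ≤ 7*(m:ℝ) - 5)]
          have hpowb : ((2*B+1 : ℕ) : ℝ)^d ≤ (12*t*(m:ℝ)/δ)^d := by
            apply pow_le_pow_left₀ (by positivity)
            push_cast
            linarith
          have hsplit : (12*t*(m:ℝ)/δ)^d = 12^d * (t/δ)^d * ((m:ℝ))^d := by
            rw [show (12*t*(m:ℝ)/δ) = 12*(t/δ)*(m:ℝ) from by ring]
            rw [mul_pow, mul_pow]
          have hI := I_inv hdim hprec n t htpos hlt.le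
          calc ((2*B+1 : ℕ) : ℝ)^d ≤ (12*t*(m:ℝ)/δ)^d := hpowb
          _ = 12^d * (t/δ)^d * ((m:ℝ))^d := hsplit
          _ ≤ (CC hdim hprec * kk hdim hprec n * h t) * ((m:ℝ))^d := by
              apply mul_le_mul_of_nonneg_right hI
              positivity
          _ = CC hdim hprec * h t * (kk hdim hprec n * ((m:ℝ))^d) := by ring
          _ = CC hdim hprec * h t * kk hdim hprec (n+1) := by rw [hkk1]
      have hcomb : mu hdim hprec T ≤ ENNReal.ofReal (CC hdim hprec * h t) := by
        calc mu hdim hprec T ≤ J.card * ENNReal.ofReal (1 / kk hdim hprec (n+1)) := hmuT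
        _ ≤ ((2*B+1)^d : ℕ) * ENNReal.ofReal (1 / kk hdim hprec (n+1)) := by
            apply mul_le_mul_left
            exact_mod_cast hcard
        _ = ENNReal.ofReal ((((2*B+1)^d : ℕ) : ℝ) * (1 / kk hdim hprec (n+1))) := by
            rw [ENNReal.ofReal_mul (by positivity)]
            rw [ENNReal.ofReal_natCast]
        _ ≤ ENNReal.ofReal (CC hdim hprec * h t) := by
            apply ENNReal.ofReal_le_ofReal
            have hcast : (((2*B+1)^d : ℕ) : ℝ) = ((2*B+1 : ℕ) : ℝ)^d := by push_cast; ring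
            rw [hcast]
            exact hreal
      exact le_trans hred hcomb
end Keleti6

namespace Keleti7
open Keleti Keleti2 Keleti3 Keleti4 Keleti5 Keleti6

lemma int_extract {K P J e : ℤ} (hK48 : 48 ≤ K) (hP : 3*|P| + 2 < K) (he : e = 0 ∨ e = 1)
    (hZ : |K*J + 3*P*e| ≤ 2) : J = 0 ∧ (e = 1 → P = 0) := by
  have h3Pe : |3*P*e| ≤ 3*|P| := by
    rcases he with he | he
    · rw [he]; simp
    · rw [he, mul_one, abs_mul]
      simp [abs_of_nonneg]
  have hKJ : |K*J| ≤ 2 + 3*|P| := by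
    have h1 : K*J = (K*J + 3*P*e) + (-(3*P*e)) := by ring
    calc |K*J| = |(K*J + 3*P*e) + (-(3*P*e))| := by rw [← h1]
    _ ≤ |K*J + 3*P*e| + |(-(3*P*e))| := abs_add_le _ _
    _ = |K*J + 3*P*e| + |3*P*e| := by rw [abs_neg]
    _ ≤ 2 + 3*|P| := add_le_add hZ h3Pe
  have hJ0 : J = 0 := by
    by_contra hJ
    have h1 : 1 ≤ |J| := Int.one_le_abs (by omega)
    have h2 : K ≤ K*|J| := le_mul_of_one_le_right (by linarith) h1
    rw [abs_mul, abs_of_pos (by linarith : (0:ℤ) < K)] at hKJ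
    linarith
  refine ⟨hJ0, fun he1 => ?_⟩
  rw [hJ0, he1, mul_zero, zero_add, mul_one] at hZ
  have h5 : |3*P| = 3*|P| := by rw [abs_mul]; simp [abs_of_nonneg]
  rw [h5] at hZ
  have : |P| = 0 := by
    have := abs_nonneg P
    omega
  exact abs_eq_zero.mp this

variable {d : ℕ} {h : ℝ → ℝ}
variable (hdim : IsDimFun h) (hprec : Prec h (fun x : ℝ => x ^ d))

lemma quad_step (hd : 0 < d) (n : ℕ) {i1 i2 i3 i4 : ℕ}
    (hl1 : i1 < kk hdim hprec (n+1)) (hl2 : i2 < kk hdim hprec (n+1))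
    (hl3 : i3 < kk hdim hprec (n+1)) (hl4 : i4 < kk hdim hprec (n+1))
    (hV : ∀ a : Fin d,
      center hdim hprec n (i1 / MM hdim hprec n) a - center hdim hprec n (i2 / MM hdim hprec n) a
      + center hdim hprec n (i3 / MM hdim hprec n) a
      - center hdim hprec n (i4 / MM hdim hprec n) a = 0)
    (hB : ∀ a : Fin d,
      |center hdim hprec (n+1) i1 a - center hdim hprec (n+1) i2 a
        + center hdim hprec (n+1) i3 a - center hdim hprec (n+1) i4 a| ≤ 2 * dl hdim hprec (n+1)) :
    (∀ a : Fin d,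
      center hdim hprec (n+1) i1 a - center hdim hprec (n+1) i2 a
      + center hdim hprec (n+1) i3 a - center hdim hprec (n+1) i4 a = 0)
    ∧ (i1 / MM hdim hprec n = i2 / MM hdim hprec n
        ∧ i3 / MM hdim hprec n = i4 / MM hdim hprec n
      ∨ i1 / MM hdim hprec n = i4 / MM hdim hprec n
        ∧ i3 / MM hdim hprec n = i2 / MM hdim hprec n) := by
  set γ := dl hdim hprec (n+1) with hγdef
  have hγpos : 0 < γ := dl_pos hdim hprec (n+1)
  set M := MM hdim hprec n with hMdef
  set m := mm hdim hprec n with hmdef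
  set l1 := i1 / M with hl1def
  set l2 := i2 / M with hl2def
  set l3 := i3 / M with hl3def
  set l4 := i4 / M with hl4def
  have hlk1 : l1 < kk hdim hprec n := parent_lt hdim hprec hl1
  have hlk2 : l2 < kk hdim hprec n := parent_lt hdim hprec hl2
  have hlk3 : l3 < kk hdim hprec n := parent_lt hdim hprec hl3
  have hlk4 : l4 < kk hdim hprec n := parent_lt hdim hprec hl4
  set P : ℤ := (4:ℤ)^l1 - 4^l2 + 4^l3 - 4^l4 with hPdef
  set Zint : Fin d → ℤ := fun a =>
    (KK hdim hprec n : ℤ) * ((jdig m (i1 % M) (a:ℕ) : ℤ) - (jdig m (i2 % M) (a:ℕ) : ℤ)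
      + (jdig m (i3 % M) (a:ℕ) : ℤ) - (jdig m (i4 % M) (a:ℕ) : ℤ))
    + 3 * P * (if (a:ℕ) = 0 then 1 else 0) with hZdef
  have hlin : ∀ a : Fin d,
      center hdim hprec (n+1) i1 a - center hdim hprec (n+1) i2 a
      + center hdim hprec (n+1) i3 a - center hdim hprec (n+1) i4 a
      = γ * ((Zint a : ℤ) : ℝ) := by
    intro a
    have hwb : ∀ i : ℕ, ((wb hdim hprec n i a : ℕ) : ℝ)
        = (KK hdim hprec n : ℝ) * (jdig m (i % M) (a:ℕ) : ℝ)
          + 3 * (4:ℝ)^(i / M) * (if (a:ℕ) = 0 then 1 else 0) := by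
      intro i
      unfold wb
      push_cast [apply_ite (Nat.cast : ℕ → ℝ)]
      ring
    have hZcast : ((Zint a : ℤ) : ℝ)
        = (KK hdim hprec n : ℝ) * ((jdig m (i1 % M) (a:ℕ) : ℝ) - (jdig m (i2 % M) (a:ℕ) : ℝ)
            + (jdig m (i3 % M) (a:ℕ) : ℝ) - (jdig m (i4 % M) (a:ℕ) : ℝ))
          + 3 * ((4:ℝ)^l1 - 4^l2 + 4^l3 - 4^l4) * (if (a:ℕ) = 0 then 1 else 0) := by
      rw [hZdef, hPdef]
      push_cast [apply_ite (Int.cast : ℤ → ℝ)]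
      ring
    rw [center_succ, center_succ, center_succ, center_succ, hZcast,
      hwb i1, hwb i2, hwb i3, hwb i4]
    rw [← hl1def, ← hl2def, ← hl3def, ← hl4def]
    linear_combination hV a
  have hZb : ∀ a : Fin d, |Zint a| ≤ 2 := by
    intro a
    have h1 := hB a
    rw [hlin a, abs_mul, abs_of_pos hγpos] at h1
    have h2 : |((Zint a : ℤ) : ℝ)| ≤ 2 := by
      have := (mul_le_mul_iff_right₀ hγpos).mp (by linarith : γ * |((Zint a : ℤ) : ℝ)| ≤ γ * 2)
      linarith
    exact_mod_cast h2
  -- bounds on P and K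
  have hkpos : 0 < kk hdim hprec n := kk_pos hdim hprec n
  set X : ℤ := (4:ℤ)^(kk hdim hprec n - 1) with hXdef
  have hX1 : (1:ℤ) ≤ X := one_le_pow₀ (by norm_num)
  have hKX : (KK hdim hprec n : ℤ) = 48 * X := by
    have heq : kk hdim hprec n - 1 + 1 = kk hdim hprec n := by omega
    have : (KK hdim hprec n : ℤ) = 12 * 4^(kk hdim hprec n) := by
      unfold KK Kc; push_cast; ring
    rw [this, ← heq, pow_succ, hXdef]
    ring
  have hpow_le : ∀ l : ℕ, l < kk hdim hprec n → (1:ℤ) ≤ 4^l ∧ (4:ℤ)^l ≤ X := by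
    intro l hlk
    exact ⟨one_le_pow₀ (by norm_num),
      pow_le_pow_right₀ (by norm_num) (by omega)⟩
  have hPabs : |P| ≤ 2*X := by
    obtain ⟨ha1, hb1⟩ := hpow_le l1 hlk1
    obtain ⟨ha2, hb2⟩ := hpow_le l2 hlk2
    obtain ⟨ha3, hb3⟩ := hpow_le l3 hlk3
    obtain ⟨ha4, hb4⟩ := hpow_le l4 hlk4
    rw [abs_le, hPdef]
    constructor <;> linarith
  have hK48 : (48:ℤ) ≤ (KK hdim hprec n : ℤ) := by rw [hKX]; linarith
  have hPK : 3*|P| + 2 < (KK hdim hprec n : ℤ) := by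
    rw [hKX]; linarith
  have hext : ∀ a : Fin d,
      ((jdig m (i1 % M) (a:ℕ) : ℤ) - (jdig m (i2 % M) (a:ℕ) : ℤ)
        + (jdig m (i3 % M) (a:ℕ) : ℤ) - (jdig m (i4 % M) (a:ℕ) : ℤ)) = 0
      ∧ ((if ((a:ℕ) = 0) then (1:ℤ) else 0) = 1 → P = 0) := by
    intro a
    apply int_extract hK48 hPK
    · split
      · right; rfl
      · left; rfl
    · exact hZb a
  have hP0 : P = 0 := by
    have h2 := (hext (⟨0, hd⟩ : Fin d)).2
    apply h2
    simp
  have hmatch : i1 / M = i2 / M ∧ i3 / M = i4 / M ∨ i1 / M = i4 / M ∧ i3 / M = i2 / M := by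
    have hnat : (4:ℕ)^l1 + 4^l3 = 4^l2 + 4^l4 := by
      have hint : (4:ℤ)^l1 + 4^l3 = 4^l2 + 4^l4 := by
        rw [hPdef] at hP0; linarith
      exact_mod_cast hint
    rcases pow4 hnat with ⟨hA, hB'⟩ | ⟨hA, hB'⟩
    · left; exact ⟨hA, hB'⟩
    · right; exact ⟨hA, hB'⟩
  refine ⟨?_, hmatch⟩
  intro a
  rw [hlin a]
  have hZ0 : Zint a = 0 := by
    rw [hZdef]
    simp only
    rw [(hext a).1, hP0]
    ring
  rw [hZ0]
  simp

end Keleti7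

namespace Keleti8
open Keleti Keleti2 Keleti3 Keleti4 Keleti5 Keleti6 Keleti7
open scoped ENNReal

variable {d : ℕ} {h : ℝ → ℝ}
variable (hdim : IsDimFun h) (hprec : Prec h (fun x : ℝ => x ^ d))

lemma gauge_lower (hd : 0 < d) : 0 < gaugeMeasure h (EE hdim hprec (d := d)) := by
  have hCpos := CC_pos (h := h) hdim hprec
  set Cn : ℝ≥0∞ := ENNReal.ofReal (CC hdim hprec) with hCn
  have hCn0 : Cn ≠ 0 := by
    rw [hCn]
    simp only [ne_eq, ENNReal.ofReal_eq_zero, not_le]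
    exact hCpos
  have hCnt : Cn ≠ ⊤ := ENNReal.ofReal_ne_top
  have hle : (Cn⁻¹ • mu hdim hprec) ≤ gaugeMeasure h (X := EuclideanSpace ℝ (Fin d)) := by
    unfold gaugeMeasure
    apply Measure.le_mkMetric _ _ (ENNReal.ofReal (dl hdim hprec 1))
      (ENNReal.ofReal_pos.mpr (dl_pos hdim hprec 1))
    intro s hs
    rw [Measure.smul_apply, smul_eq_mul]
    have hmb := mass_bound hdim hprec hd s hs
    have hsplit : ENNReal.ofReal (CC hdim hprec * h ((EMetric.diam s).toReal))
        = Cn * ENNReal.ofReal (h ((EMetric.diam s).toReal)) := by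
      rw [hCn, ← ENNReal.ofReal_mul hCpos.le]
    calc Cn⁻¹ * mu hdim hprec s
        ≤ Cn⁻¹ * (Cn * ENNReal.ofReal (h ((EMetric.diam s).toReal))) := by
          apply mul_le_mul_right
          rw [← hsplit]
          exact hmb
    _ = ENNReal.ofReal (h ((EMetric.diam s).toReal)) := by
          rw [← mul_assoc, ENNReal.inv_mul_cancel hCn0 hCnt, one_mul]
  have h1 : (Cn⁻¹ • mu hdim hprec) (EE hdim hprec (d := d))
      ≤ gaugeMeasure h (EE hdim hprec (d := d)) := hle _
  rw [Measure.smul_apply, smul_eq_mul, mu_EE hdim hprec, mul_one] at h1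
  have h2 : 0 < Cn⁻¹ := ENNReal.inv_pos.mpr hCnt
  exact lt_of_lt_of_le h2 h1

lemma EE_avoid (hd : 0 < d) :
    ∀ x₁ ∈ EE hdim hprec (d := d), ∀ x₂ ∈ EE hdim hprec (d := d),
    ∀ x₃ ∈ EE hdim hprec (d := d), ∀ x₄ ∈ EE hdim hprec (d := d),
    x₁ ≠ x₂ → x₁ ≠ x₄ → x₁ - x₂ + x₃ - x₄ ≠ 0 := by
  classical
  intro x₁ h₁ x₂ h₂ x₃ h₃ x₄ h₄ h12 h14 heq
  have hexach : ∀ x ∈ EE hdim hprec (d := d), ∀ n : ℕ,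
      ∃ i, i < kk hdim hprec n ∧ x ∈ cell hdim hprec n i := by
    intro x hx n
    have := Set.mem_iInter.mp hx n
    simp only [Set.mem_iUnion] at this
    obtain ⟨i, hi, hm⟩ := this
    exact ⟨i, Finset.mem_range.mp hi, hm⟩
  choose I1 hI1lt hI1mem using hexach x₁ h₁
  choose I2 hI2lt hI2mem using hexach x₂ h₂
  choose I3 hI3lt hI3mem using hexach x₃ h₃
  choose I4 hI4lt hI4mem using hexach x₄ h₄
  have hcons : ∀ (I : ℕ → ℕ) (x : EuclideanSpace ℝ (Fin d)),
      (∀ n, I n < kk hdim hprec n) → (∀ n, x ∈ cell hdim hprec n (I n)) →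
      ∀ n, I (n+1) / MM hdim hprec n = I n := by
    intro I x hlt hmem n
    exact cell_disjoint hdim hprec (parent_lt hdim hprec (hlt (n+1))) (hlt n)
      (cell_subset hdim hprec (hlt (n+1)) (hmem (n+1))) (hmem n)
  have hc1 := hcons I1 x₁ hI1lt hI1mem
  have hc2 := hcons I2 x₂ hI2lt hI2mem
  have hc3 := hcons I3 x₃ hI3lt hI3mem
  have hc4 := hcons I4 x₄ hI4lt hI4mem
  have hz : ∀ a : Fin d, x₁ a - x₂ a + x₃ a - x₄ a = 0 := by
    intro a
    have hcong := congrArg (fun z : EuclideanSpace ℝ (Fin d) => z a) heq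
    simpa using hcong
  have hBnd : ∀ n, ∀ a : Fin d,
      |center hdim hprec n (I1 n) a - center hdim hprec n (I2 n) a
        + center hdim hprec n (I3 n) a - center hdim hprec n (I4 n) a| ≤ 2 * dl hdim hprec n := by
    intro n a
    have e1 := hI1mem n a
    have e2 := hI2mem n a
    have e3 := hI3mem n a
    have e4 := hI4mem n a
    have hza := hz a
    rw [abs_le] at e1 e2 e3 e4 ⊢
    constructor
    · linarith [e1.1, e1.2, e2.1, e2.2, e3.1, e3.2, e4.1, e4.2]
    · linarith [e1.1, e1.2, e2.1, e2.2, e3.1, e3.2, e4.1, e4.2]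
  have hVall : ∀ n, ∀ a : Fin d,
      center hdim hprec n (I1 n) a - center hdim hprec n (I2 n) a
        + center hdim hprec n (I3 n) a - center hdim hprec n (I4 n) a = 0 := by
    intro n
    induction n with
    | zero =>
      have z1 : I1 0 = 0 := by have := hI1lt 0; rw [kk_zero] at this; omega
      have z2 : I2 0 = 0 := by have := hI2lt 0; rw [kk_zero] at this; omega
      have z3 : I3 0 = 0 := by have := hI3lt 0; rw [kk_zero] at this; omega
      have z4 : I4 0 = 0 := by have := hI4lt 0; rw [kk_zero] at this; omega
      intro a
      rw [z1, z2, z3, z4]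
      ring
    | succ n ih =>
      have hVn : ∀ a : Fin d,
          center hdim hprec n (I1 (n+1) / MM hdim hprec n) a
          - center hdim hprec n (I2 (n+1) / MM hdim hprec n) a
          + center hdim hprec n (I3 (n+1) / MM hdim hprec n) a
          - center hdim hprec n (I4 (n+1) / MM hdim hprec n) a = 0 := by
        intro a
        rw [hc1 n, hc2 n, hc3 n, hc4 n]
        exact ih a
      exact (quad_step hdim hprec hd n (hI1lt (n+1)) (hI2lt (n+1)) (hI3lt (n+1)) (hI4lt (n+1))
        hVn (hBnd (n+1))).1
  -- pick a separating scale
  have hd12 : 0 < dist x₁ x₂ := dist_pos.mpr h12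
  have hd14 : 0 < dist x₁ x₄ := dist_pos.mpr h14
  have hmin : 0 < min (dist x₁ x₂) (dist x₁ x₄) := lt_min hd12 hd14
  have hd1 : (0:ℝ) < (d:ℝ) + 1 := by positivity
  set ε := min (dist x₁ x₂) (dist x₁ x₄) / ((d:ℝ) + 1) with hεdef
  have hεpos : 0 < ε := div_pos hmin hd1
  obtain ⟨n, hn⟩ := dl_exists_lt hdim hprec hεpos
  have hdlmin : (d:ℝ) * dl hdim hprec n < min (dist x₁ x₂) (dist x₁ x₄) := by
    have h2 : (d:ℝ) * dl hdim hprec n ≤ (d:ℝ) * ε :=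
      mul_le_mul_of_nonneg_left hn.le (Nat.cast_nonneg d)
    have h3 : (d:ℝ) * ε < min (dist x₁ x₂) (dist x₁ x₄) := by
      rw [hεdef, mul_div_assoc']
      rw [div_lt_iff₀ hd1]
      nlinarith
    linarith
  have hne12 : I1 n ≠ I2 n := by
    intro hEq
    have hm2 : x₂ ∈ cell hdim hprec n (I1 n) := by rw [hEq]; exact hI2mem n
    have := same_cell_dist hdim hprec (hI1mem n) hm2
    have := min_le_left (dist x₁ x₂) (dist x₁ x₄)
    linarith [same_cell_dist hdim hprec (hI1mem n) hm2]
  have hne14 : I1 n ≠ I4 n := by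
    intro hEq
    have hm4 : x₄ ∈ cell hdim hprec n (I1 n) := by rw [hEq]; exact hI4mem n
    have := min_le_right (dist x₁ x₂) (dist x₁ x₄)
    linarith [same_cell_dist hdim hprec (hI1mem n) hm4]
  have hVn : ∀ a : Fin d,
      center hdim hprec n (I1 (n+1) / MM hdim hprec n) a
      - center hdim hprec n (I2 (n+1) / MM hdim hprec n) a
      + center hdim hprec n (I3 (n+1) / MM hdim hprec n) a
      - center hdim hprec n (I4 (n+1) / MM hdim hprec n) a = 0 := by
    intro a
    rw [hc1 n, hc2 n, hc3 n, hc4 n]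
    exact hVall n a
  have hmatch := (quad_step hdim hprec hd n (hI1lt (n+1)) (hI2lt (n+1)) (hI3lt (n+1))
    (hI4lt (n+1)) hVn (hBnd (n+1))).2
  rw [hc1 n, hc2 n, hc3 n, hc4 n] at hmatch
  rcases hmatch with ⟨hA, _⟩ | ⟨hA, _⟩
  · exact hne12 hA
  · exact hne14 hA

end Keleti8

theorem stmt_17 (d : ℕ) (hd : 0 < d) (h : ℝ → ℝ) (hdim : IsDimFun h)
    (hprec : Prec h (fun x : ℝ => x ^ d)) :
    ∃ E : Set (EuclideanSpace ℝ (Fin d)), IsCompact E ∧ 0 < gaugeMeasure h E ∧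
      ∀ x₁ ∈ E, ∀ x₂ ∈ E, ∀ x₃ ∈ E, ∀ x₄ ∈ E,
        x₁ ≠ x₂ → x₁ ≠ x₃ → x₁ ≠ x₄ → x₂ ≠ x₃ → x₂ ≠ x₄ → x₃ ≠ x₄ →
          x₁ - x₂ + x₃ - x₄ ≠ 0 := by
  refine ⟨Keleti5.EE hdim hprec, Keleti5.EE_compact hdim hprec,
    Keleti8.gauge_lower hdim hprec hd, ?_⟩
  intro x₁ h₁ x₂ h₂ x₃ h₃ x₄ h₄ h12 _ h14 _ _ _
  exact Keleti8.EE_avoid hdim hprec hd x₁ h₁ x₂ h₂ x₃ h₃ x₄ h₄ h12 h14
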